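/- If m is a power of 2, then over GF(2) the matrix L_LP defined by L_{11}=1, L_{i1}=L_{1j}=0 for i,j ≥ 2, and L_{ij} = C(i-2, j-2) mod 2 for 2 ≤ i,j ≤ m, satisfies L_LP^{-1} = L_LP, and P J L_LP^{-1} = U_LP J, where U_LP is the upper unitriangular matrix with all entries on and above the diagonal equal to 1, P is the binary Pascal matrix, and J is the anti-diagonal matrix. -/

import Mathlib

open Matrix

/-- The binary Pascal matrix over GF(2): entries C(j-1, i-1) mod 2 (1-indexed),
i.e. C(j, i) with 0-indexed `Fin`. -/
def pascal (m : ℕ) : Matrix (Fin m) (Fin m) (ZMod 2) :=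
  fun i j => (Nat.choose j.val i.val : ZMod 2)

/-- The anti-diagonal matrix over GF(2), with ones on the anti-diagonal. -/
def antiDiag (m : ℕ) : Matrix (Fin m) (Fin m) (ZMod 2) :=
  fun i j => if i.val + j.val + 1 = m then 1 else 0

/-- The Larcher–Pillichshammer lower unitriangular matrix: `L₁₁ = 1`,
`L_{i1} = L_{1j} = 0` for `i, j ≥ 2`, and `L_{ij} = C(i-2, j-2) mod 2`
for `2 ≤ i, j ≤ m` (1-indexed). -/
def LLP (m : ℕ) : Matrix (Fin m) (Fin m) (ZMod 2) :=
  fun i j =>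
    if i.val = 0 ∧ j.val = 0 then 1
    else if i.val = 0 ∨ j.val = 0 then 0
    else (Nat.choose (i.val - 1) (j.val - 1) : ZMod 2)

/-- The Larcher–Pillichshammer upper unitriangular matrix with all entries on
and above the diagonal equal to 1. -/
def ULP (m : ℕ) : Matrix (Fin m) (Fin m) (ZMod 2) :=
  fun i j => if i ≤ j then 1 else 0

open Finset

lemma hock (a : ℕ) : ∀ M, ∑ t ∈ range M, t.choose a = M.choose (a+1) := by
  intro M
  induction M with
  | zero => simp
  | succ M ih =>
    rw [sum_range_succ, ih, Nat.add_comm]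
    exact (Nat.choose_succ_succ M a).symm

lemma sum_choose_all (c M : ℕ) (h : c < M) : ∑ d ∈ range M, c.choose d = 2 ^ c := by
  rw [← Nat.sum_range_choose c]
  exact (Finset.sum_subset (by intro x hx; simp at hx ⊢; omega)
    (fun x hx hnx => Nat.choose_eq_zero_of_lt (by simp at hx hnx; omega))).symm

lemma lemA (a b N : ℕ) (h : a < N) :
    ∑ j ∈ range N, a.choose j * j.choose b = a.choose b * 2 ^ (a - b) := by
  by_cases hba : b ≤ a
  · have h1 : ∑ j ∈ range N, a.choose j * j.choose b
        = ∑ j ∈ range N, (if b ≤ j then a.choose b * (a - b).choose (j - b) else 0) := by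
      refine Finset.sum_congr rfl fun j _ => ?_
      by_cases hbj : b ≤ j
      · rw [if_pos hbj]
        by_cases hja : j ≤ a
        · exact Nat.choose_mul hbj
        · rw [Nat.choose_eq_zero_of_lt (show a < j by omega),
            Nat.choose_eq_zero_of_lt (show a - b < j - b by omega)]
          ring
      · rw [if_neg hbj, Nat.choose_eq_zero_of_lt (show j < b by omega), mul_zero]
    rw [h1, Finset.range_eq_Ico, ← Finset.sum_Ico_consecutive _ (Nat.zero_le b) (by omega : b ≤ N)]
    have h2 : ∑ j ∈ Ico 0 b, (if b ≤ j then a.choose b * (a - b).choose (j - b) else 0) = 0 := by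
      refine Finset.sum_eq_zero fun j hj => ?_
      simp only [mem_Ico] at hj
      rw [if_neg (by omega)]
    rw [h2, zero_add, Finset.sum_Ico_eq_sum_range]
    have h3 : ∀ j ∈ range (N - b), (if b ≤ b + j then a.choose b * (a - b).choose (b + j - b) else 0)
        = a.choose b * (a - b).choose j := by
      intro j _; rw [if_pos (by omega), Nat.add_sub_cancel_left]
    rw [Finset.sum_congr rfl h3, ← Finset.mul_sum, sum_choose_all _ _ (by omega)]
  · rw [Nat.choose_eq_zero_of_lt (by omega), zero_mul]
    refine Finset.sum_eq_zero fun j _ => ?_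
    by_cases hja : j ≤ a
    · rw [Nat.choose_eq_zero_of_lt (show j < b by omega), mul_zero]
    · rw [Nat.choose_eq_zero_of_lt (show a < j by omega), zero_mul]

lemma lemB (N : ℕ) : ∀ a b, ∑ t ∈ range (N+1), t.choose a * (N - t).choose b
    = (N+1).choose (a+b+1) := by
  induction N with
  | zero =>
    intro a b
    cases a <;> cases b <;> simp [Nat.choose]
  | succ N ih =>
    intro a b
    cases b with
    | zero =>
      simp only [Nat.choose_zero_right, mul_one]
      rw [hock]
    | succ b =>
      rw [sum_range_succ, Nat.sub_self, Nat.choose_zero_succ, mul_zero, add_zero]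
      have h1 : ∀ t ∈ range (N+1), t.choose a * (N + 1 - t).choose (b+1)
          = t.choose a * (N - t).choose b + t.choose a * (N - t).choose (b+1) := by
        intro t ht
        simp only [mem_range] at ht
        have : N + 1 - t = (N - t) + 1 := by omega
        rw [this, Nat.choose_succ_succ, Nat.mul_add]
      rw [Finset.sum_congr rfl h1, Finset.sum_add_distrib, ih a b, ih a (b+1)]
      have : a + (b+1) + 1 = (a + b + 1) + 1 := by omega
      rw [this, Nat.choose_succ_succ (N+1) (a+b+1)]

lemma odd_pow2 : ∀ n r : ℕ, r ≤ 2 ^ n - 1 → (2 ^ n - 1).choose r % 2 = 1 := by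
  intro n
  induction n with
  | zero => intro r hr; interval_cases r <;> simp
  | succ n ih =>
    intro r hr
    have h2 : Fact (Nat.Prime 2) := ⟨Nat.prime_two⟩
    have hpow : (2:ℕ) ^ (n+1) = 2 * 2 ^ n := by ring
    have hp : 0 < (2:ℕ)^n := Nat.pow_pos (by norm_num)
    have key := Choose.choose_modEq_choose_mod_mul_choose_div_nat (p := 2)
      (n := 2 ^ (n+1) - 1) (k := r)
    have e1 : (2 ^ (n+1) - 1) % 2 = 1 := by omega
    have e2 : (2 ^ (n+1) - 1) / 2 = 2 ^ n - 1 := by omega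
    have e3 : Nat.choose 1 (r % 2) = 1 := by
      rcases Nat.mod_two_eq_zero_or_one r with h | h <;> rw [h] <;> rfl
    rw [e1, e2, e3, one_mul] at key
    rw [Nat.ModEq] at key
    rw [key]
    exact ih (r / 2) (by omega)

lemma cast_mod2 (x : ℕ) : (x : ZMod 2) = ((x % 2 : ℕ) : ZMod 2) := (ZMod.natCast_mod x 2).symm

lemma LLP_zero_right (m : ℕ) (i k : Fin m) (hk : k.val = 0) :
    LLP m i k = if i.val = 0 then 1 else 0 := by
  simp only [LLP, hk]
  by_cases hi : i.val = 0 <;> simp [hi]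

lemma LLP_zero_left (m : ℕ) (i k : Fin m) (hi : i.val = 0) :
    LLP m i k = if k.val = 0 then 1 else 0 := by
  simp only [LLP, hi]
  by_cases hk : k.val = 0 <;> simp [hk]

lemma LLP_pos (m : ℕ) (i k : Fin m) (hi : i.val ≠ 0) (hk : k.val ≠ 0) :
    LLP m i k = ((i.val - 1).choose (k.val - 1) : ZMod 2) := by
  simp [LLP, hi, hk]

lemma PJ_entry (m : ℕ) (i j : Fin m) :
    (pascal m * antiDiag m) i j = ((m - 1 - j.val).choose i.val : ZMod 2) := by
  have hj := j.isLt
  rw [Matrix.mul_apply, Finset.sum_eq_single (⟨m - 1 - j.val, by omega⟩ : Fin m)]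
  · show (((m - 1 - j.val).choose i.val : ZMod 2)) * (if (m - 1 - j.val) + j.val + 1 = m then (1:ZMod 2) else 0) = _
    rw [if_pos (by omega), mul_one]
  · intro b _ hb
    have : ¬ (b.val + j.val + 1 = m) := fun h => hb (Fin.ext (by simp; omega))
    show _ * (if b.val + j.val + 1 = m then (1:ZMod 2) else 0) = 0
    rw [if_neg this, mul_zero]
  · intro h; exact absurd (Finset.mem_univ _) h

lemma UJ_entry (m : ℕ) (i k : Fin m) :
    (ULP m * antiDiag m) i k = if i.val + k.val + 1 ≤ m then 1 else 0 := by
  have hk := k.isLt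
  rw [Matrix.mul_apply, Finset.sum_eq_single (⟨m - 1 - k.val, by omega⟩ : Fin m)]
  · show (if i ≤ ⟨m - 1 - k.val, by omega⟩ then (1:ZMod 2) else 0) *
      (if (m - 1 - k.val) + k.val + 1 = m then (1:ZMod 2) else 0) = _
    rw [if_pos (show (m - 1 - k.val) + k.val + 1 = m by omega), mul_one]
    have : (i ≤ (⟨m - 1 - k.val, by omega⟩ : Fin m)) ↔ i.val + k.val + 1 ≤ m := by
      rw [Fin.le_def]; simp; omega
    by_cases hle : i.val + k.val + 1 ≤ m
    · rw [if_pos (this.mpr hle), if_pos hle]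
    · rw [if_neg (fun h => hle (this.mp h)), if_neg hle]
  · intro b _ hb
    have : ¬ (b.val + k.val + 1 = m) := fun h => hb (Fin.ext (by simp; omega))
    show _ * (if b.val + k.val + 1 = m then (1:ZMod 2) else 0) = 0
    rw [if_neg this, mul_zero]
  · intro h; exact absurd (Finset.mem_univ _) h

lemma hock' (a : ℕ) : ∀ M, ∑ t ∈ range M, t.choose a = M.choose (a+1) := by
  intro M
  induction M with
  | zero => simp
  | succ M ih =>
    rw [sum_range_succ, ih, Nat.add_comm]
    exact (Nat.choose_succ_succ M a).symm

lemma LLP_mul_self (m : ℕ) (hm0 : 0 < m) : LLP m * LLP m = 1 := by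
  ext i k
  rw [Matrix.mul_apply, Matrix.one_apply]
  by_cases hk : k.val = 0
  · rw [Finset.sum_eq_single (⟨0, hm0⟩ : Fin m)]
    · rw [LLP_zero_right m ⟨0, hm0⟩ k hk, if_pos rfl, mul_one,
        LLP_zero_right m i ⟨0, hm0⟩ rfl]
      by_cases hi : i.val = 0
      · rw [if_pos hi, if_pos (Fin.ext (by omega))]
      · rw [if_neg hi, if_neg (fun h => hi (by rw [h]; exact hk))]
    · intro b _ hb
      rw [LLP_zero_right m b k hk,
        if_neg (fun h : b.val = 0 => hb (Fin.ext (by simpa using h))), mul_zero]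
    · intro h; exact absurd (Finset.mem_univ _) h
  · by_cases hi : i.val = 0
    · rw [Finset.sum_eq_single (⟨0, hm0⟩ : Fin m)]
      · rw [LLP_zero_left m ⟨0, hm0⟩ k rfl, if_neg hk, mul_zero,
          if_neg (fun h : i = k => hk (by rw [← h]; exact hi))]
      · intro b _ hb
        rw [LLP_zero_left m i b hi,
          if_neg (fun h : b.val = 0 => hb (Fin.ext (by simpa using h))), zero_mul]
      · intro h; exact absurd (Finset.mem_univ _) h
    · set f : ℕ → ZMod 2 := fun t => if t = 0 then 0
        else ((i.val - 1).choose (t - 1) : ZMod 2) * ((t - 1).choose (k.val - 1) : ZMod 2)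
        with hf
      have hsum : ∀ j : Fin m, LLP m i j * LLP m j k = f j.val := by
        intro j
        by_cases hj : j.val = 0
        · rw [LLP_zero_left m j k hj, if_neg hk, mul_zero, hf]
          simp only [if_pos hj]
        · rw [LLP_pos m i j hi hj, LLP_pos m j k hj hk, hf]
          simp only [if_neg hj]
      rw [Finset.sum_congr rfl (fun j _ => hsum j), Fin.sum_univ_eq_sum_range f m]
      obtain ⟨m', rfl⟩ : ∃ m', m = m' + 1 := ⟨m - 1, by omega⟩
      rw [Finset.sum_range_succ']
      have hf0 : f 0 = 0 := by simp [hf]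
      have step : ∀ t ∈ range m', f (t + 1) =
          (((i.val - 1).choose t * t.choose (k.val - 1) : ℕ) : ZMod 2) := by
        intro t _
        have e2 : t + 1 - 1 = t := by omega
        simp only [hf]
        rw [if_neg (Nat.succ_ne_zero t), e2]
        push_cast; ring
      rw [Finset.sum_congr rfl step, hf0, add_zero, ← Nat.cast_sum,
        lemA (i.val - 1) (k.val - 1) m' (by omega)]
      by_cases hik : i = k
      · rw [if_pos hik, hik, Nat.choose_self, Nat.sub_self, pow_zero, mul_one, Nat.cast_one]
      · rw [if_neg hik]
        have hvk : i.val ≠ k.val := fun h => hik (Fin.ext h)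
        rcases Nat.lt_or_ge i.val k.val with hlt | hge
        · rw [Nat.choose_eq_zero_of_lt (show i.val - 1 < k.val - 1 by omega), zero_mul,
            Nat.cast_zero]
        · have hgt : k.val < i.val := by omega
          have hmod : ((i.val - 1).choose (k.val - 1) * 2 ^ (i.val - 1 - (k.val - 1))) % 2 = 0 := by
            have h2 : (2:ℕ) ^ (i.val - 1 - (k.val - 1))
                = 2 * 2 ^ (i.val - 1 - (k.val - 1) - 1) := by
              conv_lhs => rw [show i.val - 1 - (k.val - 1)
                = (i.val - 1 - (k.val - 1) - 1) + 1 by omega]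
              ring
            rw [h2, show (i.val - 1).choose (k.val - 1) * (2 * 2 ^ (i.val - 1 - (k.val - 1) - 1))
              = 2 * ((i.val - 1).choose (k.val - 1) * 2 ^ (i.val - 1 - (k.val - 1) - 1)) by ring]
            exact Nat.mul_mod_right 2 _
          rw [cast_mod2, hmod, Nat.cast_zero]

lemma PJL (n m : ℕ) (hm : m = 2 ^ n) :
    pascal m * antiDiag m * LLP m = ULP m * antiDiag m := by
  have hm0 : 0 < m := by rw [hm]; exact Nat.pow_pos (by norm_num)
  ext i k
  rw [Matrix.mul_apply, UJ_entry]
  have hi := i.isLt; have hk := k.isLt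
  by_cases hk0 : k.val = 0
  · rw [Finset.sum_eq_single (⟨0, hm0⟩ : Fin m)]
    · rw [PJ_entry, LLP_zero_right m ⟨0, hm0⟩ k hk0, if_pos rfl, mul_one,
        if_pos (by omega)]
      have e : ((⟨0, hm0⟩ : Fin m)).val = 0 := rfl
      rw [e, Nat.sub_zero, cast_mod2, show m - 1 = 2 ^ n - 1 by omega,
        odd_pow2 n i.val (by omega), Nat.cast_one]
    · intro b _ hb
      rw [LLP_zero_right m b k hk0,
        if_neg (fun h : b.val = 0 => hb (Fin.ext (by simpa using h))), mul_zero]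
    · intro h; exact absurd (Finset.mem_univ _) h
  · set f : ℕ → ZMod 2 := fun t => if t = 0 then 0
      else ((m - 1 - t).choose i.val : ZMod 2) * ((t - 1).choose (k.val - 1) : ZMod 2)
      with hf
    have hsum : ∀ j : Fin m, (pascal m * antiDiag m) i j * LLP m j k = f j.val := by
      intro j
      rw [PJ_entry]
      by_cases hj : j.val = 0
      · rw [LLP_zero_left m j k hj, if_neg hk0, mul_zero, hf]
        simp only [if_pos hj]
      · rw [LLP_pos m j k hj hk0, hf]
        simp only [if_neg hj]
    rw [Finset.sum_congr rfl (fun j _ => hsum j), Fin.sum_univ_eq_sum_range f m]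
    obtain ⟨m', rfl⟩ : ∃ m', m = m' + 1 := ⟨m - 1, by omega⟩
    have hm' : 1 ≤ m' := by omega
    rw [Finset.sum_range_succ']
    have hf0 : f 0 = 0 := by simp [hf]
    have step : ∀ t ∈ range m', f (t + 1) =
        ((t.choose (k.val - 1) * (m' - 1 - t).choose i.val : ℕ) : ZMod 2) := by
      intro t _
      have e1 : m' + 1 - 1 - (t + 1) = m' - 1 - t := by omega
      have e2 : t + 1 - 1 = t := by omega
      simp only [hf]
      rw [if_neg (Nat.succ_ne_zero t), e1, e2]
      push_cast; ring
    have hb := lemB (m' - 1) (k.val - 1) i.val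
    rw [show m' - 1 + 1 = m' by omega] at hb
    rw [Finset.sum_congr rfl step, hf0, add_zero, ← Nat.cast_sum, hb,
      show k.val - 1 + i.val + 1 = i.val + k.val by omega]
    by_cases hle : i.val + k.val + 1 ≤ m' + 1
    · have hodd : m'.choose (i.val + k.val) % 2 = 1 := by
        have h := odd_pow2 n (i.val + k.val) (by omega)
        rwa [show (2:ℕ) ^ n - 1 = m' by omega] at h
      rw [if_pos hle, cast_mod2, hodd, Nat.cast_one]
    · rw [if_neg hle, Nat.choose_eq_zero_of_lt (show m' < i.val + k.val by omega),
        Nat.cast_zero]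

/-- If `m` is a power of 2, then `L_LP⁻¹ = L_LP` and `P J L_LP⁻¹ = U_LP J`. -/
theorem LLP_inv_and_identity (n m : ℕ) (hm : m = 2 ^ n) :
    (LLP m)⁻¹ = LLP m ∧
    pascal m * antiDiag m * (LLP m)⁻¹ = ULP m * antiDiag m := by

  have hm0 : 0 < m := by rw [hm]; exact Nat.pow_pos (by norm_num)
  have hinv : (LLP m)⁻¹ = LLP m := Matrix.inv_eq_left_inv (LLP_mul_self m hm0)
  exact ⟨hinv, by rw [hinv]; exact PJL n m hm⟩
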